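/- Let q > r ≥ 1 be integers and let e and J be disjoint sets with |e| = r and |J| = q. Let G be the complete r-uniform hypergraph on vertex set e ∪ J. There exists a function ψ from the q-element subsets of V(G) to the reals such that: (i) for every edge e' of G, the sum of ψ(H) over all q-subsets H containing e' equals 1 if e' = e and 0 otherwise; and (ii) for every q-subset H, |ψ(H)| ≤ 2^{r−j}·(r−j)! / C(q−r+j, j) ≤ 2^r·r!, where j := |e ∩ H|. -/

import Mathlib

open Finset

open Finset

noncomputable def cc (q r : ℕ) : ℕ → ℝ := fun j =>
  if j = r then 1 / (q.choose r)
  else if hj : j < r then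
    -(∑ k ∈ (Finset.Icc (j+1) r).attach,
        cc q r k.1 * ((((r-j).choose (k.1-j)) * ((q-r+j).choose k.1) : ℕ) : ℝ))
      / ((q-r+j).choose j)
  else 0
termination_by j => r - j
decreasing_by
  have := (Finset.mem_Icc.mp k.2).1
  omega

lemma cc_self (q r : ℕ) : cc q r r = 1 / (q.choose r) := by rw [cc]; simp

lemma cc_lt {q r j : ℕ} (hj : j < r) :
    cc q r j = -(∑ k ∈ Finset.Icc (j+1) r,
        cc q r k * ((((r-j).choose (k-j)) * ((q-r+j).choose k) : ℕ) : ℝ))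
      / ((q-r+j).choose j) := by
  rw [cc]
  rw [if_neg (by omega), dif_pos hj,
    Finset.sum_attach _ (fun k => cc q r k * ((((r-j).choose (k-j)) * ((q-r+j).choose k) : ℕ) : ℝ))]

lemma cc_eq {q r j : ℕ} (hj : j ≤ r) (hqr : r ≤ q) :
    ∑ k ∈ Finset.Icc j r,
        cc q r k * ((((r-j).choose (k-j)) * ((q-r+j).choose k) : ℕ) : ℝ)
      = if j = r then 1 else 0 := by
  rcases eq_or_lt_of_le hj with rfl | hjr
  · rw [if_pos rfl, Finset.Icc_self, Finset.sum_singleton, cc_self]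
    simp only [Nat.sub_self, Nat.choose_self, one_mul, Nat.sub_add_cancel hqr, Nat.cast_one]
    rw [one_div, inv_mul_cancel₀]
    exact_mod_cast Nat.choose_pos hqr |>.ne'
  · rw [if_neg (by omega)]
    rw [show Finset.Icc j r = insert j (Finset.Icc (j+1) r) by
      rw [Finset.Icc_add_one_left_eq_Ioc, Finset.Ioc_insert_left hj]]
    rw [Finset.sum_insert (by simp), cc_lt hjr]
    have hpos : (0:ℝ) < ((q-r+j).choose j : ℕ) := by
      exact_mod_cast Nat.choose_pos (by omega)
    rw [Nat.sub_self, Nat.choose_zero_right, one_mul]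
    field_simp
    ring

lemma geo_sum (s : ℕ) : ∑ t ∈ Finset.Icc 1 s, (2:ℝ)⁻¹^t ≤ 1 := by
  have : ∀ s : ℕ, ∑ t ∈ Finset.Icc 1 s, (2:ℝ)⁻¹^t = 1 - 2⁻¹^s := by
    intro s
    induction s with
    | zero => simp
    | succ n ih =>
      rw [show Finset.Icc 1 (n+1) = insert (n+1) (Finset.Icc 1 n) by
        rw [← Finset.Ico_insert_right (show 1 ≤ n+1 by omega), Finset.Ico_add_one_right_eq_Icc]]
      rw [Finset.sum_insert (by simp), ih]
      ring
  rw [this]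
  have : (0:ℝ) ≤ 2⁻¹^s := by positivity
  linarith

lemma geo_sum' (j r : ℕ) : ∑ k ∈ Finset.Icc (j+1) r, (2:ℝ)⁻¹^(k-j) ≤ 1 := by
  rw [Finset.sum_bij' (fun k _ => k - j) (fun t (_ : t ∈ Finset.Icc 1 (r-j)) => t + j)
    (fun k hk => by simp only [Finset.mem_Icc] at hk ⊢; omega)
    (fun t ht => by simp only [Finset.mem_Icc] at ht ⊢; omega)
    (fun k hk => by simp only [Finset.mem_Icc] at hk; show k - j + j = k; omega)
    (fun t ht => by simp only [Finset.mem_Icc] at ht; show t + j - j = t; omega)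
    (fun k hk => rfl)]
  exact geo_sum (r - j)

lemma term_nat {q r j k : ℕ} (hqr : r < q) (hk1 : j + 1 ≤ k) (hk2 : k ≤ r) :
    2^(r-k) * (r-k).factorial * ((r-j).choose (k-j) * (q-r+j).choose k) * 2^(k-j)
      ≤ 2^(r-j) * (r-j).factorial * (q-r+k).choose k := by
  have h1 : 2^(r-k) * 2^(k-j) = 2^(r-j) := by rw [← pow_add]; congr 1; omega
  have h2 : (r-k).factorial * (r-j).choose (k-j) ≤ (r-j).factorial := by
    have := Nat.choose_mul_factorial_mul_factorial (show k - j ≤ r - j by omega)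
    have hrk : r - j - (k - j) = r - k := by omega
    rw [hrk] at this
    calc (r-k).factorial * (r-j).choose (k-j)
        ≤ ((r-j).choose (k-j) * (k-j).factorial) * (r-k).factorial := by
          have : 1 ≤ (k-j).factorial := Nat.one_le_iff_ne_zero.mpr (Nat.factorial_ne_zero _)
          nlinarith [Nat.zero_le ((r-j).choose (k-j) * (r-k).factorial)]
      _ = (r-j).factorial := this
  have h3 : (q-r+j).choose k ≤ (q-r+k).choose k := Nat.choose_le_choose k (by omega)
  calc 2^(r-k) * (r-k).factorial * ((r-j).choose (k-j) * (q-r+j).choose k) * 2^(k-j)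
      = (2^(r-k) * 2^(k-j)) * (((r-k).factorial * (r-j).choose (k-j)) * (q-r+j).choose k) := by
        ring
    _ ≤ 2^(r-j) * ((r-j).factorial * (q-r+k).choose k) :=
        Nat.mul_le_mul (le_of_eq h1) (Nat.mul_le_mul h2 h3)
    _ = 2^(r-j) * (r-j).factorial * (q-r+k).choose k := by ring

lemma cc_bound (q r : ℕ) (hqr : r < q) (j : ℕ) (hj : j ≤ r) :
    |cc q r j| ≤ ((2^(r-j) * (r-j).factorial : ℕ) : ℝ) / (((q-r+j).choose j : ℕ) : ℝ) := by
  rcases eq_or_lt_of_le hj with rfl | h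
  · rw [cc_self]
    rw [Nat.sub_self, Nat.sub_add_cancel (le_of_lt hqr)]
    simp [abs_of_nonneg, Nat.choose_pos (le_of_lt hqr), one_div]
  · have hm : (0:ℝ) < (((q-r+j).choose j : ℕ) : ℝ) := by
      exact_mod_cast Nat.choose_pos (by omega)
    rw [cc_lt h, abs_div, abs_neg, abs_of_pos hm]
    gcongr
    calc |∑ k ∈ Finset.Icc (j+1) r,
            cc q r k * ((((r-j).choose (k-j)) * ((q-r+j).choose k) : ℕ) : ℝ)|
        ≤ ∑ k ∈ Finset.Icc (j+1) r,
            |cc q r k * ((((r-j).choose (k-j)) * ((q-r+j).choose k) : ℕ) : ℝ)| :=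
          Finset.abs_sum_le_sum_abs _ _
      _ ≤ ∑ k ∈ Finset.Icc (j+1) r,
            ((2^(r-j) * (r-j).factorial : ℕ) : ℝ) * (2:ℝ)⁻¹^(k-j) := by
          apply Finset.sum_le_sum
          intro k hk
          simp only [Finset.mem_Icc] at hk
          obtain ⟨hk1, hk2⟩ := hk
          rw [abs_mul, Nat.abs_cast]
          have IH := cc_bound q r hqr k hk2
          have hck : (0:ℝ) < (((q-r+k).choose k : ℕ) : ℝ) := by
            exact_mod_cast Nat.choose_pos (by omega)
          calc |cc q r k| * ((((r-j).choose (k-j)) * ((q-r+j).choose k) : ℕ) : ℝ)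
              ≤ (((2^(r-k) * (r-k).factorial : ℕ) : ℝ) / (((q-r+k).choose k : ℕ) : ℝ))
                  * ((((r-j).choose (k-j)) * ((q-r+j).choose k) : ℕ) : ℝ) := by
                gcongr
            _ ≤ ((2^(r-j) * (r-j).factorial : ℕ) : ℝ) * (2:ℝ)⁻¹^(k-j) := by
                have h2 : ((2:ℝ))⁻¹^(k-j) = ((2^(k-j) : ℕ) : ℝ)⁻¹ := by
                  push_cast
                  rw [inv_pow]
                rw [h2, ← div_eq_mul_inv, div_mul_eq_mul_div,
                  div_le_div_iff₀ hck (by positivity)]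
                exact_mod_cast term_nat hqr hk1 hk2
      _ = ((2^(r-j) * (r-j).factorial : ℕ) : ℝ)
            * ∑ k ∈ Finset.Icc (j+1) r, (2:ℝ)⁻¹^(k-j) := by rw [Finset.mul_sum]
      _ ≤ ((2^(r-j) * (r-j).factorial : ℕ) : ℝ) * 1 :=
          mul_le_mul_of_nonneg_left (geo_sum' j r) (by positivity)
      _ = ((2^(r-j) * (r-j).factorial : ℕ) : ℝ) := mul_one _
termination_by r - j
decreasing_by omega


lemma count_superset {V : Type} [DecidableEq V] (T S : Finset V) (hST : S ⊆ T) (t : ℕ)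
    (ht : t ≤ T.card) :
    ((T.powersetCard t).filter (fun B => S ⊆ B)).card
      = (T.card - S.card).choose (T.card - t) := by
  have hS : S.card ≤ T.card := Finset.card_le_card hST
  rcases lt_or_ge t S.card with hlt | hle
  · rw [Finset.filter_false_of_mem, Finset.card_empty]
    · exact (Nat.choose_eq_zero_of_lt (by omega)).symm
    · intro B hB hSB
      rw [Finset.mem_powersetCard] at hB
      have := Finset.card_le_card hSB
      omega
  · rw [Finset.card_nbij' (t := (T \ S).powersetCard (t - S.card)) (fun B => B \ S) (fun C => C ∪ S)
      (fun B hB => by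
        simp only [Finset.mem_coe, Finset.mem_filter, Finset.mem_powersetCard] at hB ⊢
        exact ⟨Finset.sdiff_subset_sdiff hB.1.1 le_rfl,
          by rw [Finset.card_sdiff_of_subset hB.2, hB.1.2]⟩)
      (fun C hC => by
        simp only [Finset.mem_coe, Finset.mem_filter, Finset.mem_powersetCard] at hC ⊢
        have hCS : Disjoint C S := Finset.disjoint_of_subset_left hC.1
          Finset.sdiff_disjoint
        refine ⟨⟨Finset.union_subset (hC.1.trans Finset.sdiff_subset) hST, ?_⟩,
          Finset.subset_union_right⟩
        rw [Finset.card_union_of_disjoint hCS, hC.2]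
        omega)
      (fun B hB => by
        simp only [Finset.mem_coe, Finset.mem_filter, Finset.mem_powersetCard] at hB
        exact Finset.sdiff_union_of_subset hB.2)
      (fun C hC => by
        rw [Finset.mem_coe, Finset.mem_powersetCard] at hC
        have hCS : Disjoint C S := Finset.disjoint_of_subset_left hC.1
          Finset.sdiff_disjoint
        show (C ∪ S) \ S = C
        rw [Finset.union_sdiff_right, Finset.sdiff_eq_self_of_disjoint hCS])]
    rw [Finset.card_powersetCard, Finset.card_sdiff_of_subset hST]
    have h1 : T.card - t = (T.card - S.card) - (t - S.card) := by omega
    rw [h1, Nat.choose_symm (by omega)]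

lemma fiber_card {V : Type} [DecidableEq V] (q r : ℕ) (e J e' : Finset V) (hd : Disjoint e J)
    (he : e.card = r) (hJ : J.card = q) (he' : e' ⊆ e ∪ J) (hrq : r ≤ q) (j' : ℕ) :
    (((((e ∪ J).powersetCard q).filter (fun H => e' ⊆ H)).filter
        (fun H => (e ∩ H).card = j')).card)
      = ((e.powersetCard j').filter (fun A => e' ∩ e ⊆ A)).card
        * ((J.powersetCard (q - j')).filter (fun B => e' ∩ J ⊆ B)).card := by
  rw [← Finset.card_product]
  apply Finset.card_nbij' (fun H => (e ∩ H, J ∩ H)) (fun p => p.1 ∪ p.2)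
  · intro H hH
    simp only [Finset.mem_coe, Finset.mem_filter, Finset.mem_powersetCard, Finset.mem_product] at hH ⊢
    obtain ⟨⟨⟨hHsub, hHcard⟩, he'H⟩, hcard⟩ := hH
    have hsplit : (e ∩ H) ∪ (J ∩ H) = H := by
      rw [← Finset.union_inter_distrib_right, Finset.inter_eq_right.mpr hHsub]
    have hdisj : Disjoint (e ∩ H) (J ∩ H) :=
      Finset.disjoint_of_subset_left Finset.inter_subset_left
        (Finset.disjoint_of_subset_right Finset.inter_subset_left hd)
    have hcards : (e ∩ H).card + (J ∩ H).card = q := by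
      rw [← Finset.card_union_of_disjoint hdisj, hsplit, hHcard]
    refine ⟨⟨⟨Finset.inter_subset_left, hcard⟩,
        Finset.subset_inter Finset.inter_subset_right
          (Finset.inter_subset_left.trans he'H)⟩,
      ⟨Finset.inter_subset_left, by omega⟩,
      Finset.subset_inter Finset.inter_subset_right
        (Finset.inter_subset_left.trans he'H)⟩
  · intro p hp
    simp only [Finset.mem_coe, Finset.mem_filter, Finset.mem_powersetCard, Finset.mem_product] at hp ⊢
    obtain ⟨⟨⟨hA, hAc⟩, hA'⟩, ⟨hB, hBc⟩, hB'⟩ := hp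
    have hdisj : Disjoint p.1 p.2 :=
      Finset.disjoint_of_subset_left hA (Finset.disjoint_of_subset_right hB hd)
    have hAq : j' ≤ q := le_trans (hAc ▸ Finset.card_le_card hA |>.trans he.le) hrq
    have hBe : e ∩ p.2 = ∅ := Finset.disjoint_iff_inter_eq_empty.mp
      (Finset.disjoint_of_subset_right hB hd)
    have hAe : e ∩ p.1 = p.1 := Finset.inter_eq_right.mpr hA
    have hEA : e ∩ (p.1 ∪ p.2) = p.1 := by
      rw [Finset.inter_union_distrib_left, hAe, hBe, Finset.union_empty]
    refine ⟨⟨⟨Finset.union_subset_union hA hB, ?_⟩, ?_⟩, by rw [hEA]; exact hAc⟩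
    · rw [Finset.card_union_of_disjoint hdisj, hAc, hBc]; omega
    · intro x hx
      rcases Finset.mem_union.mp (he' hx) with hxe | hxJ
      · exact Finset.mem_union_left _ (hA' (Finset.mem_inter.mpr ⟨hx, hxe⟩))
      · exact Finset.mem_union_right _ (hB' (Finset.mem_inter.mpr ⟨hx, hxJ⟩))
  · intro H hH
    simp only [Finset.mem_coe, Finset.mem_filter, Finset.mem_powersetCard] at hH
    show (e ∩ H) ∪ (J ∩ H) = H
    rw [← Finset.union_inter_distrib_right, Finset.inter_eq_right.mpr hH.1.1.1]
  · intro p hp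
    simp only [Finset.mem_coe, Finset.mem_filter, Finset.mem_powersetCard, Finset.mem_product] at hp
    obtain ⟨⟨⟨hA, hAc⟩, hA'⟩, ⟨hB, hBc⟩, hB'⟩ := hp
    have hBe : e ∩ p.2 = ∅ := Finset.disjoint_iff_inter_eq_empty.mp
      (Finset.disjoint_of_subset_right hB hd)
    have hAJ : J ∩ p.1 = ∅ := Finset.disjoint_iff_inter_eq_empty.mp
      (Finset.disjoint_of_subset_right hA hd.symm)
    show (e ∩ (p.1 ∪ p.2), J ∩ (p.1 ∪ p.2)) = p
    have h1 : e ∩ (p.1 ∪ p.2) = p.1 := by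
      rw [Finset.inter_union_distrib_left, Finset.inter_eq_right.mpr hA, hBe,
        Finset.union_empty]
    have h2 : J ∩ (p.1 ∪ p.2) = p.2 := by
      rw [Finset.inter_union_distrib_left, Finset.inter_eq_right.mpr hB, hAJ,
        Finset.empty_union]
    rw [h1, h2]

lemma main_sum {V : Type} [DecidableEq V] (q r : ℕ) (hq : r < q) (e J e' : Finset V)
    (hd : Disjoint e J) (he : e.card = r) (hJ : J.card = q) (he' : e' ⊆ e ∪ J)
    (he'c : e'.card = r) :
    ∑ H ∈ ((e ∪ J).powersetCard q).filter (fun H => e' ⊆ H), cc q r (e ∩ H).card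
      = if e' = e then 1 else 0 := by
  set s := ((e ∪ J).powersetCard q).filter (fun H => e' ⊆ H) with hs
  set i := (e' ∩ e).card with hi
  have hi_r : i ≤ r := he'c ▸ Finset.card_le_card Finset.inter_subset_left
  have hiJ : (e' ∩ J).card = r - i := by
    have hu : (e' ∩ e) ∪ (e' ∩ J) = e' := by
      rw [← Finset.inter_union_distrib_left, Finset.inter_eq_left.mpr he']
    have hdisj : Disjoint (e' ∩ e) (e' ∩ J) :=
      Finset.disjoint_of_subset_left Finset.inter_subset_right
        (Finset.disjoint_of_subset_right Finset.inter_subset_right hd)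
    have := Finset.card_union_of_disjoint hdisj
    rw [hu, he'c] at this
    omega
  have hmaps : ∀ H ∈ s, (e ∩ H).card ∈ Finset.range (r+1) := by
    intro H _
    rw [Finset.mem_range]
    have := Finset.card_le_card (Finset.inter_subset_left (s₁ := e) (s₂ := H))
    omega
  calc ∑ H ∈ s, cc q r (e ∩ H).card
      = ∑ j' ∈ Finset.range (r+1),
          ∑ H ∈ s.filter (fun H => (e ∩ H).card = j'), cc q r j' :=
        (Finset.sum_fiberwise_of_maps_to' hmaps (cc q r)).symm
    _ = ∑ j' ∈ Finset.range (r+1),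
          (((r-i).choose (r-j') * (q-r+i).choose j' : ℕ) : ℝ) * cc q r j' := by
        refine Finset.sum_congr rfl fun j' hj' => ?_
        rw [Finset.mem_range] at hj'
        rw [Finset.sum_const, nsmul_eq_mul]
        congr 1
        rw [hs, fiber_card q r e J e' hd he hJ he' hq.le j',
          count_superset e (e' ∩ e) Finset.inter_subset_right j' (by omega),
          count_superset J (e' ∩ J) Finset.inter_subset_right (q - j') (by omega),
          he, hJ, hiJ, ← hi]
        have h1 : q - (r - i) = q - r + i := by omega
        have h2 : q - (q - j') = j' := by omega
        rw [h1, h2]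
    _ = ∑ k ∈ Finset.Icc i r,
          (((r-i).choose (r-k) * (q-r+i).choose k : ℕ) : ℝ) * cc q r k :=
        (Finset.sum_subset
          (fun x hx => by
            simp only [Finset.mem_Icc] at hx
            rw [Finset.mem_range]; omega)
          (fun x hx hnx => by
            rw [Finset.mem_range] at hx
            rw [Finset.mem_Icc] at hnx
            have hxi : x < i := by omega
            have : (r-i).choose (r-x) = 0 := Nat.choose_eq_zero_of_lt (by omega)
            rw [this]
            simp)).symm
    _ = ∑ k ∈ Finset.Icc i r,
          cc q r k * (((r-i).choose (k-i) * (q-r+i).choose k : ℕ) : ℝ) := by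
        refine Finset.sum_congr rfl fun k hk => ?_
        rw [Finset.mem_Icc] at hk
        have h3 : r - k = (r-i) - (k-i) := by omega
        rw [h3, Nat.choose_symm (by omega)]
        ring
    _ = if i = r then 1 else 0 := cc_eq hi_r hq.le
    _ = if e' = e then 1 else 0 := by
        have hiff : i = r ↔ e' = e := by
          constructor
          · intro hir
            have h4 : e' ∩ e = e' := Finset.eq_of_subset_of_card_le
              Finset.inter_subset_left (by omega)
            have h5 : e' ⊆ e := by rw [← h4]; exact Finset.inter_subset_right
            exact Finset.eq_of_subset_of_card_le h5 (by omega)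
          · rintro rfl
            rw [hi, Finset.inter_self, he]
        simp [hiff]

/-- The edge-gadget of Glock–Kühn–Lo–Osthus: for `q > r ≥ 1` and disjoint sets
`e`, `J` with `|e| = r`, `|J| = q`, there is a weighting `ψ` of the `q`-subsets
of `e ∪ J` such that summing `ψ` over the `q`-subsets containing a given
`r`-subset `e'` of `e ∪ J` gives `1` if `e' = e` and `0` otherwise, and whose
values are bounded by `2^{r-j}·(r-j)! / C(q-r+j, j) ≤ 2^r·r!` where
`j = |e ∩ H|`. -/
theorem edge_gadget {V : Type} [DecidableEq V] (q r : ℕ) (hr : 1 ≤ r) (hq : r < q)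
    (e J : Finset V) (hd : Disjoint e J) (he : e.card = r) (hJ : J.card = q) :
    ∃ ψ : Finset V → ℝ,
      (∀ e' ∈ (e ∪ J).powersetCard r,
        (∑ H ∈ ((e ∪ J).powersetCard q).filter (fun H => e' ⊆ H), ψ H)
          = if e' = e then 1 else 0) ∧
      (∀ H ∈ (e ∪ J).powersetCard q,
        |ψ H| ≤ ((2 ^ (r - (e ∩ H).card) * Nat.factorial (r - (e ∩ H).card) : ℕ) : ℝ)
            / (((q - r + (e ∩ H).card).choose ((e ∩ H).card) : ℕ) : ℝ) ∧
        ((2 ^ (r - (e ∩ H).card) * Nat.factorial (r - (e ∩ H).card) : ℕ) : ℝ)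
            / (((q - r + (e ∩ H).card).choose ((e ∩ H).card) : ℕ) : ℝ)
          ≤ ((2 ^ r * Nat.factorial r : ℕ) : ℝ)) := by
  refine ⟨fun H => cc q r (e ∩ H).card, ?_, ?_⟩
  · intro e' he'
    rw [Finset.mem_powersetCard] at he'
    exact main_sum q r hq e J e' hd he hJ he'.1 he'.2
  · intro H _
    have hj : (e ∩ H).card ≤ r := he ▸ Finset.card_le_card Finset.inter_subset_left
    refine ⟨cc_bound q r hq _ hj, ?_⟩
    have h1 : (1:ℝ) ≤ (((q - r + (e ∩ H).card).choose ((e ∩ H).card) : ℕ) : ℝ) := by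
      exact_mod_cast Nat.one_le_iff_ne_zero.mpr (Nat.choose_pos (by omega)).ne'
    calc ((2 ^ (r - (e ∩ H).card) * Nat.factorial (r - (e ∩ H).card) : ℕ) : ℝ)
          / (((q - r + (e ∩ H).card).choose ((e ∩ H).card) : ℕ) : ℝ)
        ≤ ((2 ^ (r - (e ∩ H).card) * Nat.factorial (r - (e ∩ H).card) : ℕ) : ℝ) :=
          div_le_self (by positivity) h1
      _ ≤ ((2 ^ r * Nat.factorial r : ℕ) : ℝ) := by
          exact_mod_cast Nat.mul_le_mul
            (Nat.pow_le_pow_right (by norm_num) (by omega))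
            (Nat.factorial_le (by omega))
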